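/- Let H be a Hopf algebra over a field k and M a right-right Hopf module over H. Define P : M → M by P(m) = Σ m₀ · S(m₁). Then P(m) ∈ M^{coH} for every m ∈ M (i.e., ρ(P(m)) = P(m) ⊗ 1), and P restricted to M^{coH} is the identity; hence P is a projection of M onto the coinvariants M^{coH}. -/

import Mathlib

open TensorProduct Coalgebra

noncomputable section AuxConv

variable {k H A B : Type*} [CommSemiring k]
  [AddCommMonoid H] [Module k H] [Coalgebra k H]
  [Semiring A] [Algebra k A] [Semiring B] [Algebra k B]

/-- Convolution product on `Hom(H, A)`. -/
def conv (f g : H →ₗ[k] A) : H →ₗ[k] A :=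
  LinearMap.mul' k A ∘ₗ TensorProduct.map f g ∘ₗ comul

/-- Convolution unit. -/
def convOne : H →ₗ[k] A := Algebra.linearMap k A ∘ₗ counit

lemma conv_apply' (f g : H →ₗ[k] A) (c : H) {ι : Type*} (r : Coalgebra.Repr k c ι) :
    conv f g c = ∑ i ∈ r.index, f (r.left i) * g (r.right i) := by
  simp only [conv, LinearMap.comp_apply, ← r.eq, map_sum, TensorProduct.map_tmul,
    LinearMap.mul'_apply]

lemma sum_smul_counit_eq' {a : H} {ι : Type*} (r : Coalgebra.Repr k a ι) :
    ∑ i ∈ r.index, (counit (R := k) (r.right i)) • r.left i = a := by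
  have h := congrArg (TensorProduct.rid k H) (sum_tmul_counit_eq (R := k) r)
  rw [map_sum] at h
  simp only [rid_tmul, one_smul] at h
  exact h

lemma sum_counit_smul_eq' {a : H} {ι : Type*} (r : Coalgebra.Repr k a ι) :
    ∑ i ∈ r.index, (counit (R := k) (r.left i)) • r.right i = a := by
  have h := congrArg (TensorProduct.lid k H) (sum_counit_tmul_eq (R := k) r)
  rw [map_sum] at h
  simp only [lid_tmul, one_smul] at h
  exact h

lemma conv_one (f : H →ₗ[k] A) : conv f convOne = f := by
  ext c
  rw [conv_apply' f convOne c (ℛ k c)]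
  calc ∑ i ∈ (ℛ k c).index, f ((ℛ k c).left i) * convOne ((ℛ k c).right i)
      = ∑ i ∈ (ℛ k c).index, f ((counit (R := k) ((ℛ k c).right i)) • (ℛ k c).left i) := by
        refine Finset.sum_congr rfl fun i _ => ?_
        simp [convOne, Algebra.smul_def, Algebra.commutes]
    _ = f c := by rw [← map_sum, sum_smul_counit_eq']

lemma one_conv (f : H →ₗ[k] A) : conv convOne f = f := by
  ext c
  rw [conv_apply' convOne f c (ℛ k c)]
  calc ∑ i ∈ (ℛ k c).index, convOne ((ℛ k c).left i) * f ((ℛ k c).right i)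
      = ∑ i ∈ (ℛ k c).index, f ((counit (R := k) ((ℛ k c).left i)) • (ℛ k c).right i) := by
        refine Finset.sum_congr rfl fun i _ => ?_
        simp [convOne, Algebra.smul_def]
    _ = f c := by rw [← map_sum, sum_counit_smul_eq']

lemma conv_assoc (f g h : H →ₗ[k] A) : conv (conv f g) h = conv f (conv g h) := by
  have e1 : TensorProduct.map (conv f g) h
      = TensorProduct.map (LinearMap.mul' k A ∘ₗ TensorProduct.map f g) h
          ∘ₗ LinearMap.rTensor H (comul (R := k)) := by
    apply TensorProduct.ext'
    intro x y
    simp [conv]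
  have e2 : TensorProduct.map f (conv g h)
      = TensorProduct.map f (LinearMap.mul' k A ∘ₗ TensorProduct.map g h)
          ∘ₗ LinearMap.lTensor H (comul (R := k)) := by
    apply TensorProduct.ext'
    intro x y
    simp [conv]
  have hPhi : LinearMap.mul' k A
        ∘ₗ TensorProduct.map (LinearMap.mul' k A ∘ₗ TensorProduct.map f g) h
      = (LinearMap.mul' k A
          ∘ₗ TensorProduct.map f (LinearMap.mul' k A ∘ₗ TensorProduct.map g h))
        ∘ₗ (TensorProduct.assoc k H H H).toLinearMap := by
    apply TensorProduct.ext_threefold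
    intro a b c
    simp [mul_assoc]
  ext c
  calc conv (conv f g) h c
      = LinearMap.mul' k A ((TensorProduct.map (conv f g) h) (comul c)) := rfl
    _ = LinearMap.mul' k A
          ((TensorProduct.map (LinearMap.mul' k A ∘ₗ TensorProduct.map f g) h)
            (LinearMap.rTensor H (comul (R := k)) (comul c))) := by rw [e1]; rfl
    _ = (LinearMap.mul' k A
          ∘ₗ TensorProduct.map f (LinearMap.mul' k A ∘ₗ TensorProduct.map g h))
          ((TensorProduct.assoc k H H H) (LinearMap.rTensor H (comul (R := k)) (comul c))) :=
        LinearMap.congr_fun hPhi _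
    _ = (LinearMap.mul' k A
          ∘ₗ TensorProduct.map f (LinearMap.mul' k A ∘ₗ TensorProduct.map g h))
          (LinearMap.lTensor H (comul (R := k)) (comul c)) := by rw [Coalgebra.coassoc_apply]
    _ = LinearMap.mul' k A ((TensorProduct.map f (conv g h)) (comul c)) := by rw [e2]; rfl
    _ = conv f (conv g h) c := rfl

lemma algHom_comp_conv (φ : A →ₐ[k] B) (f g : H →ₗ[k] A) :
    φ.toLinearMap ∘ₗ conv f g = conv (φ.toLinearMap ∘ₗ f) (φ.toLinearMap ∘ₗ g) := by
  ext c
  rw [LinearMap.comp_apply, conv_apply' _ _ c (ℛ k c), conv_apply' _ _ c (ℛ k c)]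
  simp

lemma algHom_comp_convOne (φ : A →ₐ[k] B) :
    φ.toLinearMap ∘ₗ (convOne (k := k) (H := H) (A := A)) = convOne := by
  ext c
  simp [convOne]

end AuxConv

noncomputable section AuxHopf

variable {k H : Type*} [CommSemiring k] [Semiring H] [HopfAlgebra k H]

lemma antipode_conv_id :
    conv (HopfAlgebra.antipode (R := k) (A := H)) LinearMap.id = convOne := by
  rw [conv, convOne, ← HopfAlgebra.mul_antipode_rTensor_comul]
  rfl

lemma id_conv_antipode :
    conv LinearMap.id (HopfAlgebra.antipode (R := k) (A := H)) = convOne := by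
  rw [conv, convOne, ← HopfAlgebra.mul_antipode_lTensor_comul]
  rfl

lemma comul_comp_antipode :
    (comul (R := k)) ∘ₗ HopfAlgebra.antipode (R := k) (A := H)
      = (TensorProduct.comm k H H).toLinearMap
          ∘ₗ TensorProduct.map (HopfAlgebra.antipode (R := k)) (HopfAlgebra.antipode (R := k))
          ∘ₗ comul := by
  set S : H →ₗ[k] H := HopfAlgebra.antipode (R := k) with hS
  set i1 : H →ₐ[k] H ⊗[k] H := Algebra.TensorProduct.includeLeft with hi1
  set i2 : H →ₐ[k] H ⊗[k] H := Algebra.TensorProduct.includeRight with hi2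
  set G : H →ₗ[k] H ⊗[k] H :=
    conv (i2.toLinearMap ∘ₗ S) (i1.toLinearMap ∘ₗ S) with hG
  -- `comul` as the convolution of the two inclusions
  have hmul12 : LinearMap.mul' k (H ⊗[k] H)
      ∘ₗ TensorProduct.map i1.toLinearMap i2.toLinearMap = LinearMap.id := by
    apply TensorProduct.ext'
    intro a b
    simp [hi1, hi2, Algebra.TensorProduct.tmul_mul_tmul]
  have hΔ : conv i1.toLinearMap i2.toLinearMap = (comul (R := k) (A := H)) := by
    rw [conv, ← LinearMap.comp_assoc, hmul12, LinearMap.id_comp]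
  -- `i2 * (i2 ∘ S) = 1`
  have h22 : conv i2.toLinearMap (i2.toLinearMap ∘ₗ S) = convOne := by
    have : conv (i2.toLinearMap ∘ₗ LinearMap.id) (i2.toLinearMap ∘ₗ S) = convOne := by
      rw [← algHom_comp_conv, id_conv_antipode, algHom_comp_convOne]
    simpa using this
  -- `i1 * (i1 ∘ S) = 1`
  have h11 : conv i1.toLinearMap (i1.toLinearMap ∘ₗ S) = convOne := by
    have : conv (i1.toLinearMap ∘ₗ LinearMap.id) (i1.toLinearMap ∘ₗ S) = convOne := by
      rw [← algHom_comp_conv, id_conv_antipode, algHom_comp_convOne]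
    simpa using this
  -- claim 2 : `Δ * G = 1`
  have claim2 : conv (comul (R := k) (A := H)) G = convOne := by
    rw [← hΔ, hG, conv_assoc, ← conv_assoc i2.toLinearMap, h22, one_conv, h11]
  -- claim 1 : `(Δ ∘ S) * Δ = 1`
  have hΔalg : (Bialgebra.comulAlgHom k H).toLinearMap = (comul (R := k) (A := H)) := rfl
  have claim1 : conv ((comul (R := k)) ∘ₗ S) (comul (R := k) (A := H)) = convOne := by
    have : conv ((Bialgebra.comulAlgHom k H).toLinearMap ∘ₗ S)
        ((Bialgebra.comulAlgHom k H).toLinearMap ∘ₗ LinearMap.id) = convOne := by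
      rw [← algHom_comp_conv, antipode_conv_id, algHom_comp_convOne]
    simpa [hΔalg] using this
  -- uniqueness of convolution inverses
  have hFG : (comul (R := k)) ∘ₗ S = G := by
    calc (comul (R := k)) ∘ₗ S = conv ((comul (R := k)) ∘ₗ S) convOne := (conv_one _).symm
      _ = conv ((comul (R := k)) ∘ₗ S) (conv (comul (R := k) (A := H)) G) := by rw [claim2]
      _ = conv (conv ((comul (R := k)) ∘ₗ S) (comul (R := k) (A := H))) G :=
          (conv_assoc _ _ _).symm
      _ = conv convOne G := by rw [claim1]
      _ = G := one_conv G
  -- identify `G` with the twisted antipode square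
  have hmul21 : LinearMap.mul' k (H ⊗[k] H)
      ∘ₗ TensorProduct.map i2.toLinearMap i1.toLinearMap
      = (TensorProduct.comm k H H).toLinearMap := by
    apply TensorProduct.ext'
    intro a b
    simp [hi1, hi2, Algebra.TensorProduct.tmul_mul_tmul]
  have hGτ : G = (TensorProduct.comm k H H).toLinearMap
      ∘ₗ TensorProduct.map S S ∘ₗ comul := by
    rw [hG, conv]
    have : TensorProduct.map (i2.toLinearMap ∘ₗ S) (i1.toLinearMap ∘ₗ S)
        = TensorProduct.map i2.toLinearMap i1.toLinearMap ∘ₗ TensorProduct.map S S :=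
      (TensorProduct.map_comp _ _ _ _)
    rw [this, ← LinearMap.comp_assoc, ← LinearMap.comp_assoc, hmul21, LinearMap.comp_assoc]
  rw [hFG, hGτ]

lemma antipode_one' : HopfAlgebra.antipode (R := k) (A := H) 1 = 1 := by
  have h := HopfAlgebra.mul_antipode_rTensor_comul_apply (R := k) (A := H) 1
  simpa [Algebra.TensorProduct.one_def] using h

end AuxHopf

noncomputable section AuxMain

variable {k H M : Type*} [CommSemiring k] [Semiring H] [HopfAlgebra k H]
  [AddCommMonoid M] [Module k M]

/-- The key Sweedler computation: `Σ m' ⋅ S(h₃) ⊗ h₁ S(h₂) = m' ⋅ S(h) ⊗ 1`. -/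
lemma key_sweedler (μ : M ⊗[k] H →ₗ[k] M) (m' : M) (h : H) :
    (TensorProduct.map μ (LinearMap.mul' k H))
      ((TensorProduct.tensorTensorTensorComm k M H H H)
        ((TensorProduct.map LinearMap.id
            ((TensorProduct.comm k H H).toLinearMap
              ∘ₗ TensorProduct.map (HopfAlgebra.antipode (R := k))
                  (HopfAlgebra.antipode (R := k))
              ∘ₗ comul))
          ((TensorProduct.assoc k M H H).symm (m' ⊗ₜ[k] comul h))))
    = μ (m' ⊗ₜ[k] HopfAlgebra.antipode (R := k) h) ⊗ₜ[k] (1 : H) := by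
  set S : H →ₗ[k] H := HopfAlgebra.antipode (R := k) with hSdef
  set G : H →ₗ[k] H ⊗[k] H :=
    (TensorProduct.comm k H H).toLinearMap ∘ₗ TensorProduct.map S S ∘ₗ comul with hGdef
  set Φ : H ⊗[k] (H ⊗[k] H) →ₗ[k] M ⊗[k] H :=
    TensorProduct.map (μ ∘ₗ TensorProduct.mk k M H m') (LinearMap.mul' k H)
      ∘ₗ (TensorProduct.leftComm k H H H).toLinearMap
      ∘ₗ LinearMap.lTensor H
          ((TensorProduct.comm k H H).toLinearMap ∘ₗ TensorProduct.map S S) with hΦdef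
  -- rewrite the LHS as `Φ` applied to `(id ⊗ Δ)(Δ h)`
  have e : (TensorProduct.map μ (LinearMap.mul' k H))
      ∘ₗ (TensorProduct.tensorTensorTensorComm k M H H H).toLinearMap
      ∘ₗ (TensorProduct.map LinearMap.id G)
      ∘ₗ (TensorProduct.assoc k M H H).symm.toLinearMap
      ∘ₗ TensorProduct.mk k M (H ⊗[k] H) m'
      = Φ ∘ₗ LinearMap.lTensor H (comul (R := k)) := by
    apply TensorProduct.ext'
    intro x y
    simp only [LinearMap.comp_apply, TensorProduct.mk_apply, LinearMap.lTensor_tmul,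
      LinearEquiv.coe_coe, TensorProduct.assoc_symm_tmul, TensorProduct.map_tmul,
      LinearMap.id_coe, id_eq, hΦdef, hGdef]
    rw [← (ℛ k y).eq]
    simp [TensorProduct.tmul_sum, TensorProduct.sum_tmul]
  have estep : (TensorProduct.map μ (LinearMap.mul' k H))
      ((TensorProduct.tensorTensorTensorComm k M H H H)
        ((TensorProduct.map LinearMap.id G)
          ((TensorProduct.assoc k M H H).symm (m' ⊗ₜ[k] comul h))))
      = Φ (LinearMap.lTensor H (comul (R := k)) (comul h)) := by
    have := LinearMap.congr_fun e (comul h)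
    simpa using this
  rw [estep]
  rw [← Coalgebra.coassoc_apply]
  -- evaluate `Φ (assoc (Δ a ⊗ b))`
  have perI : ∀ a b : H,
      Φ ((TensorProduct.assoc k H H H) ((comul (R := k) a) ⊗ₜ[k] b))
        = Coalgebra.counit (R := k) a • (μ (m' ⊗ₜ[k] S b) ⊗ₜ[k] (1 : H)) := by
    intro a b
    rw [← (ℛ k a).eq]
    simp only [TensorProduct.sum_tmul, map_sum, TensorProduct.assoc_tmul, hΦdef,
      LinearMap.comp_apply, LinearMap.lTensor_tmul, LinearEquiv.coe_coe,
      TensorProduct.map_tmul, TensorProduct.comm_tmul, TensorProduct.leftComm_tmul,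
      LinearMap.mul'_apply, TensorProduct.mk_apply]
    rw [← TensorProduct.tmul_sum, HopfAlgebra.sum_mul_antipode_eq_smul (ℛ k a)]
    rw [TensorProduct.tmul_smul]
  -- now expand `Δ h` and conclude with the counit law
  rw [← (ℛ k h).eq]
  rw [map_sum, map_sum, map_sum]
  calc ∑ i ∈ (ℛ k h).index,
        Φ ((TensorProduct.assoc k H H H)
          ((LinearMap.rTensor H (comul (R := k)))
            ((ℛ k h).left i ⊗ₜ[k] (ℛ k h).right i)))
      = ∑ i ∈ (ℛ k h).index,
          Coalgebra.counit (R := k) ((ℛ k h).left i) •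
            (μ (m' ⊗ₜ[k] S ((ℛ k h).right i)) ⊗ₜ[k] (1 : H)) := by
        refine Finset.sum_congr rfl fun i _ => ?_
        rw [LinearMap.rTensor_tmul, perI]
    _ = μ (m' ⊗ₜ[k] S (∑ i ∈ (ℛ k h).index,
          Coalgebra.counit (R := k) ((ℛ k h).left i) • (ℛ k h).right i)) ⊗ₜ[k] (1 : H) := by
        simp only [map_sum, map_smul, TensorProduct.tmul_sum, TensorProduct.tmul_smul,
          TensorProduct.sum_tmul]
        simp only [← TensorProduct.smul_tmul', map_smul]
    _ = μ (m' ⊗ₜ[k] S h) ⊗ₜ[k] (1 : H) := by rw [sum_counit_smul_eq']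

end AuxMain

section Projection

variable (k H M : Type*) [Field k] [Ring H] [HopfAlgebra k H] [AddCommGroup M] [Module k M]

/-- The map `P : M → M`, `P(m) = Σ m₀ · S(m₁)`, for a Hopf module `M` with action `μ`
and coaction `ρ`. -/
noncomputable def coinvProj (μ : M ⊗[k] H →ₗ[k] M) (ρ : M →ₗ[k] M ⊗[k] H) : M →ₗ[k] M :=
  μ ∘ₗ TensorProduct.map LinearMap.id (HopfAlgebra.antipode (R := k)) ∘ₗ ρ

/-- Let `H` be a Hopf algebra over a field `k` and `M` a (right,right) Hopf module with
action `μ` and coaction `ρ`.  Then `P(m) = Σ m₀ · S(m₁)` lands in the coinvariants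
(`ρ(P(m)) = P(m) ⊗ 1`) and restricts to the identity on `M^{coH}`; hence `P` is a
projection of `M` onto `M^{coH}`. -/
theorem coinvariants_projection
    (μ : M ⊗[k] H →ₗ[k] M) (ρ : M →ₗ[k] M ⊗[k] H)
    (hμ_one : ∀ m : M, μ (m ⊗ₜ[k] 1) = m)
    (hμ_assoc : ∀ (m : M) (g h : H), μ (μ (m ⊗ₜ[k] g) ⊗ₜ[k] h) = μ (m ⊗ₜ[k] (g * h)))
    (hρ_counit : (TensorProduct.rid k M).toLinearMap
        ∘ₗ TensorProduct.map LinearMap.id Coalgebra.counit ∘ₗ ρ = LinearMap.id)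
    (hρ_coassoc : TensorProduct.map ρ LinearMap.id ∘ₗ ρ =
      (TensorProduct.assoc k M H H).symm.toLinearMap
        ∘ₗ TensorProduct.map LinearMap.id Coalgebra.comul ∘ₗ ρ)
    (hcompat : ρ ∘ₗ μ =
      TensorProduct.map μ (LinearMap.mul' k H)
        ∘ₗ (TensorProduct.tensorTensorTensorComm k M H H H).toLinearMap
        ∘ₗ TensorProduct.map ρ Coalgebra.comul) :
    (∀ m : M, ρ (coinvProj k H M μ ρ m) = coinvProj k H M μ ρ m ⊗ₜ[k] 1) ∧
    (∀ m : M, ρ m = m ⊗ₜ[k] 1 → coinvProj k H M μ ρ m = m) ∧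
    (∀ m : M, coinvProj k H M μ ρ (coinvProj k H M μ ρ m) = coinvProj k H M μ ρ m) := by
  have part2 : ∀ m : M, ρ m = m ⊗ₜ[k] 1 → coinvProj k H M μ ρ m = m := by
    intro m hm
    have hPm : coinvProj k H M μ ρ m
        = μ ((TensorProduct.map LinearMap.id (HopfAlgebra.antipode (R := k))) (ρ m)) := rfl
    rw [hPm, hm, TensorProduct.map_tmul]
    simp only [LinearMap.id_coe, id_eq]
    rw [antipode_one', hμ_one]
  have part1 : ∀ m : M, ρ (coinvProj k H M μ ρ m) = coinvProj k H M μ ρ m ⊗ₜ[k] 1 := by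
    intro m
    obtain ⟨sf, hsf⟩ := TensorProduct.exists_finset (R := k) (ρ m)
    have hPm : coinvProj k H M μ ρ m
        = μ ((TensorProduct.map LinearMap.id (HopfAlgebra.antipode (R := k))) (ρ m)) := rfl
    have step1 : ρ (coinvProj k H M μ ρ m)
        = (TensorProduct.map μ (LinearMap.mul' k H))
            ((TensorProduct.tensorTensorTensorComm k M H H H)
              ((TensorProduct.map ρ Coalgebra.comul)
                ((TensorProduct.map LinearMap.id (HopfAlgebra.antipode (R := k))) (ρ m)))) := by
      rw [hPm]
      have := LinearMap.congr_fun hcompat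
        ((TensorProduct.map LinearMap.id (HopfAlgebra.antipode (R := k))) (ρ m))
      simpa using this
    have e2 : (TensorProduct.map ρ (Coalgebra.comul (R := k)))
        ∘ₗ (TensorProduct.map LinearMap.id (HopfAlgebra.antipode (R := k) (A := H)))
        = (TensorProduct.map LinearMap.id
            ((TensorProduct.comm k H H).toLinearMap
              ∘ₗ TensorProduct.map (HopfAlgebra.antipode (R := k))
                  (HopfAlgebra.antipode (R := k))
              ∘ₗ Coalgebra.comul))
          ∘ₗ (TensorProduct.map ρ LinearMap.id) := by
      rw [← TensorProduct.map_comp, ← TensorProduct.map_comp]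
      simp only [LinearMap.comp_id, LinearMap.id_comp]
      rw [comul_comp_antipode]
    have e2' := LinearMap.congr_fun e2 (ρ m)
    simp only [LinearMap.comp_apply] at e2'
    have step3 : (TensorProduct.map ρ LinearMap.id) (ρ m)
        = (TensorProduct.assoc k M H H).symm
            ((TensorProduct.map LinearMap.id Coalgebra.comul) (ρ m)) := by
      have := LinearMap.congr_fun hρ_coassoc m
      simpa using this
    rw [step1, e2', step3, hPm, hsf]
    simp only [map_sum, TensorProduct.sum_tmul, TensorProduct.map_tmul,
      LinearMap.id_coe, id_eq]
    refine Finset.sum_congr rfl fun p _ => ?_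
    exact key_sweedler μ p.1 p.2
  exact ⟨part1, part2, fun m => part2 _ (part1 m)⟩

end Projection
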